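/- arXiv:1911.09839 — 2 statements merged into one kernel-verified Lean document; each statement's English description precedes it below -/
import Mathlib

section
/- Define, for a function g : (changepoint sequences) → ℝ, the quantities L(k,t) = Σ_{τ ∈ T(k,t)} g(τ) for 1 ≤ k < m and L(0,t) = 0. Suppose g has the ratio property: for every τ ∈ T(k,t) with τ_{k-1} ≠ b(k-1,t), g(τ) = g(τ') · R(k,t-1), where τ' shifts τ_k,...,τ_{m-1} down by one and R(k,t-1) is a constant depending only on k and t. Then for 1 ≤ k < m and m ≤ t < n: L(k,t) = L(k-1,t) + L(k,t-1) · R(k,t-1). -/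
/-- Changepoint sequences: strictly increasing `τ_0 = 0 < τ_1 < ... < τ_m = n`. -/
def CP (n m : ℕ) : Set (Fin (m + 1) → ℕ) :=
  {τ | StrictMono τ ∧ τ 0 = 0 ∧ τ (Fin.last m) = n}

open Fin.NatCast in
/-- `T n m k t`: changepoint sequences with `τ (m-1) = t` whose entries at
indices `k, k+1, ..., m-1` are consecutive. -/
def T (n m k t : ℕ) : Set (Fin (m + 1) → ℕ) :=
  {τ | τ ∈ CP n m ∧ τ ((m - 1 : ℕ) : Fin (m + 1)) = t ∧
    ∀ i : ℕ, k ≤ i → i + 1 < m →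
      τ ((i + 1 : ℕ) : Fin (m + 1)) = τ ((i : ℕ) : Fin (m + 1)) + 1}

/-- `b m j t = t - ((m-1) - j)`. -/
def b (m j t : ℕ) : ℕ := t - ((m - 1) - j)

open Fin.NatCast

lemma castv {m : ℕ} (i : ℕ) (h : i ≤ m) : (((i : ℕ) : Fin (m+1)) : ℕ) = i :=
  Fin.val_cast_of_lt (by omega)

lemma cp_lt {n m : ℕ} {τ : Fin (m+1) → ℕ} (hτ : τ ∈ CP n m) {i j : ℕ}
    (hij : i < j) (hj : j ≤ m) : τ i < τ j := by
  apply hτ.1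
  rw [Fin.lt_def, castv i (by omega), castv j hj]
  exact hij

lemma cp_le_n {n m : ℕ} {τ : Fin (m+1) → ℕ} (hτ : τ ∈ CP n m) (i : Fin (m+1)) :
    τ i ≤ n := hτ.2.2 ▸ hτ.1.monotone (Fin.le_last i)

lemma cp_pos {n m : ℕ} {τ : Fin (m+1) → ℕ} (hτ : τ ∈ CP n m) {i : Fin (m+1)}
    (hi : 1 ≤ (i : ℕ)) : 1 ≤ τ i := by
  have h0 : τ 0 < τ i := by
    apply hτ.1
    rw [Fin.lt_def]
    simp only [Fin.val_zero]; omega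
  omega

/-- tail values are forced -/
lemma tail_val {n m k t : ℕ} {τ : Fin (m+1) → ℕ} (hτ : τ ∈ T n m k t)
    {i : ℕ} (hki : k ≤ i) (him : i < m) : τ i = t - (m - 1 - i) := by
  have key : ∀ d, d ≤ m - 1 - k → τ ((m - 1 - d : ℕ) : Fin (m+1)) = t - d := by
    intro d
    induction d with
    | zero => intro _; simpa using hτ.2.1
    | succ d ih =>
      intro hd
      have h1 := hτ.2.2 (m - 1 - (d+1)) (by omega) (by omega)
      have h2 : m - 1 - (d+1) + 1 = m - 1 - d := by omega
      rw [h2] at h1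
      have h3 := ih (by omega)
      omega
  have := key (m - 1 - i) (by omega)
  have h4 : m - 1 - (m - 1 - i) = i := by omega
  rw [h4] at this
  omega

def sf (m k : ℕ) (τ : Fin (m+1) → ℕ) : Fin (m+1) → ℕ :=
  fun i => if k ≤ (i : ℕ) ∧ (i : ℕ) < m then τ i - 1 else τ i

def uf (m k : ℕ) (τ : Fin (m+1) → ℕ) : Fin (m+1) → ℕ :=
  fun i => if k ≤ (i : ℕ) ∧ (i : ℕ) < m then τ i + 1 else τ i

lemma strictMono_of_nat {m : ℕ} {f : Fin (m+1) → ℕ}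
    (h : ∀ i : ℕ, i < m → f ((i : ℕ) : Fin (m+1)) < f ((i+1 : ℕ) : Fin (m+1))) :
    StrictMono f := by
  rw [Fin.strictMono_iff_lt_succ]
  intro i
  have hi := i.isLt
  have := h i hi
  have e1 : ((i : ℕ) : Fin (m+1)) = i.castSucc := by
    apply Fin.ext; rw [castv _ (by omega)]; simp
  have e2 : (((i : ℕ) + 1 : ℕ) : Fin (m+1)) = i.succ := by
    apply Fin.ext; rw [castv _ (by omega)]; simp
  rwa [e1, e2] at this

lemma sf_app {m k : ℕ} (τ : Fin (m+1) → ℕ) (i : ℕ) (h : i ≤ m) :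
    sf m k τ ((i : ℕ) : Fin (m+1)) =
      if k ≤ i ∧ i < m then τ ((i : ℕ) : Fin (m+1)) - 1 else τ ((i : ℕ) : Fin (m+1)) := by
  simp only [sf, castv i h]

lemma uf_app {m k : ℕ} (τ : Fin (m+1) → ℕ) (i : ℕ) (h : i ≤ m) :
    uf m k τ ((i : ℕ) : Fin (m+1)) =
      if k ≤ i ∧ i < m then τ ((i : ℕ) : Fin (m+1)) + 1 else τ ((i : ℕ) : Fin (m+1)) := by
  simp only [uf, castv i h]

lemma cast_last {m : ℕ} : ((m : ℕ) : Fin (m+1)) = Fin.last m := by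
  apply Fin.ext; rw [castv m le_rfl]; simp

lemma T_fin (n m k t : ℕ) : (T n m k t).Finite := by
  apply Set.Finite.subset (Set.Finite.pi (fun _ : Fin (m+1) => Set.finite_Iic n))
  intro τ hτ
  rw [Set.mem_pi]
  exact fun i _ => cp_le_n hτ.1 i

lemma down_mem {n m k t : ℕ} (hk : 1 ≤ k) (hkm : k < m) (hmt : m ≤ t)
    {τ : Fin (m+1) → ℕ} (hτ : τ ∈ T n m k t)
    (hne : τ ((k - 1 : ℕ) : Fin (m+1)) ≠ b m (k-1) t) :
    sf m k τ ∈ T n m k (t-1) := by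
  have hbk : τ ((k : ℕ) : Fin (m+1)) = t - (m - 1 - k) := tail_val hτ le_rfl hkm
  have hlt : τ ((k-1 : ℕ) : Fin (m+1)) < τ ((k : ℕ) : Fin (m+1)) :=
    cp_lt hτ.1 (by omega) (by omega)
  have hltb : τ ((k-1 : ℕ) : Fin (m+1)) < b m (k-1) t := by
    unfold b at hne ⊢; omega
  refine ⟨⟨?_, ?_, ?_⟩, ?_, ?_⟩
  · apply strictMono_of_nat
    intro i him
    rw [sf_app τ i (by omega), sf_app τ (i+1) him]
    have hlt2 : τ ((i : ℕ) : Fin (m+1)) < τ ((i+1 : ℕ) : Fin (m+1)) :=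
      cp_lt hτ.1 (by omega) (by omega)
    split_ifs with h1 h2 h2
    · have hp : 1 ≤ τ ((i : ℕ) : Fin (m+1)) :=
        cp_pos hτ.1 (by rw [castv i (by omega)]; omega)
      omega
    · omega
    · have : i = k - 1 := by omega
      subst this
      have hk1 : k - 1 + 1 = k := by omega
      rw [hk1]
      unfold b at hltb; omega
    · exact hlt2
  · have h0 : ((0 : ℕ) : Fin (m+1)) = 0 := by simp
    have := sf_app (k := k) τ 0 (by omega)
    rw [h0] at this
    rw [this, if_neg (by omega)]
    exact hτ.1.2.1
  · have := sf_app (k := k) τ m le_rfl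
    rw [cast_last] at this
    rw [this, if_neg (by omega)]
    exact hτ.1.2.2
  · rw [sf_app τ (m-1) (by omega), if_pos (by omega), hτ.2.1]
  · intro i hki hi1
    rw [sf_app τ i (by omega), sf_app τ (i+1) (by omega),
      if_pos (by omega), if_pos (by omega), hτ.2.2 i hki hi1]
    have hp : 1 ≤ τ ((i : ℕ) : Fin (m+1)) :=
      cp_pos hτ.1 (by rw [castv i (by omega)]; omega)
    omega

lemma up_mem {n m k t : ℕ} (hk : 1 ≤ k) (hkm : k < m) (hmt : m ≤ t) (htn : t < n)
    {τ : Fin (m+1) → ℕ} (hτ : τ ∈ T n m k (t-1)) :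
    uf m k τ ∈ T n m k t ∧
      uf m k τ ((k - 1 : ℕ) : Fin (m+1)) ≠ b m (k-1) t := by
  have hbk : τ ((k : ℕ) : Fin (m+1)) = (t-1) - (m - 1 - k) := tail_val hτ le_rfl hkm
  have hlt : τ ((k-1 : ℕ) : Fin (m+1)) < τ ((k : ℕ) : Fin (m+1)) :=
    cp_lt hτ.1 (by omega) (by omega)
  have hm1 : τ ((m-1 : ℕ) : Fin (m+1)) = t - 1 := hτ.2.1
  have hlast : τ ((m : ℕ) : Fin (m+1)) = n := by rw [cast_last]; exact hτ.1.2.2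
  refine ⟨⟨⟨?_, ?_, ?_⟩, ?_, ?_⟩, ?_⟩
  · apply strictMono_of_nat
    intro i him
    rw [uf_app τ i (by omega), uf_app τ (i+1) him]
    have hlt2 : τ ((i : ℕ) : Fin (m+1)) < τ ((i+1 : ℕ) : Fin (m+1)) :=
      cp_lt hτ.1 (by omega) (by omega)
    split_ifs with h1 h2 h2
    · omega
    · -- i = m-1, i+1 = m
      have : i = m - 1 := by omega
      subst this
      have hm' : m - 1 + 1 = m := by omega
      rw [hm', hlast, hm1]
      omega
    · omega
    · exact hlt2
  · have h0 : ((0 : ℕ) : Fin (m+1)) = 0 := by simp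
    have := uf_app (k := k) τ 0 (by omega)
    rw [h0] at this
    rw [this, if_neg (by omega)]
    exact hτ.1.2.1
  · have := uf_app (k := k) τ m le_rfl
    rw [cast_last] at this
    rw [this, if_neg (by omega)]
    exact hτ.1.2.2
  · rw [uf_app τ (m-1) (by omega), if_pos (by omega), hm1]; omega
  · intro i hki hi1
    rw [uf_app τ i (by omega), uf_app τ (i+1) (by omega),
      if_pos (by omega), if_pos (by omega), hτ.2.2 i hki hi1]
  · rw [uf_app τ (k-1) (by omega), if_neg (by omega)]
    unfold b
    omega

lemma uf_sf {n m k : ℕ} (hk : 1 ≤ k) {τ : Fin (m+1) → ℕ} (hτ : τ ∈ CP n m) :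
    uf m k (sf m k τ) = τ := by
  funext i
  by_cases h : k ≤ (i : ℕ) ∧ (i : ℕ) < m
  · have hp : 1 ≤ τ i := cp_pos hτ (by omega)
    simp only [uf, sf, if_pos h]
    omega
  · simp only [uf, sf, if_neg h]

lemma sf_uf {m k : ℕ} (τ : Fin (m+1) → ℕ) : sf m k (uf m k τ) = τ := by
  funext i
  by_cases h : k ≤ (i : ℕ) ∧ (i : ℕ) < m
  · simp only [uf, sf, if_pos h]
    omega
  · simp only [uf, sf, if_neg h]

lemma A_empty {n m t : ℕ} (hm : 1 < m) (hmt : m ≤ t) :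
    T n m 1 t ∩ {τ | τ ((0 : ℕ) : Fin (m+1)) = b m 0 t} = ∅ := by
  ext τ
  simp only [Set.mem_inter_iff, Set.mem_empty_iff_false, iff_false, not_and, Set.mem_setOf_eq]
  intro hτ
  have h0 : ((0 : ℕ) : Fin (m+1)) = 0 := by simp
  rw [h0, hτ.1.2.1]
  unfold b
  omega

lemma A_eq {n m k t : ℕ} (hk2 : 2 ≤ k) (hkm : k < m) (hmt : m ≤ t) :
    T n m k t ∩ {τ | τ ((k - 1 : ℕ) : Fin (m+1)) = b m (k-1) t} = T n m (k-1) t := by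
  ext τ
  simp only [Set.mem_inter_iff, Set.mem_setOf_eq]
  constructor
  · rintro ⟨hτ, heq⟩
    refine ⟨hτ.1, hτ.2.1, ?_⟩
    intro i hki hi1
    rcases Nat.lt_or_ge i k with hik | hik
    · have : i = k - 1 := by omega
      subst this
      have hk1 : k - 1 + 1 = k := by omega
      rw [hk1, heq, tail_val hτ le_rfl hkm]
      unfold b
      omega
    · exact hτ.2.2 i hik hi1
  · rintro hτ
    refine ⟨⟨hτ.1, hτ.2.1, fun i hki hi1 => hτ.2.2 i (by omega) hi1⟩, ?_⟩
    exact tail_val hτ le_rfl (by omega)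

lemma split_sum {α : Type*} (f : α → ℝ) (S : Set α) (hS : S.Finite) (P : Set α) :
    ∑ᶠ x ∈ S, f x = (∑ᶠ x ∈ S ∩ P, f x) + ∑ᶠ x ∈ S \ P, f x := by
  rw [← finsum_mem_union ?_ (hS.inter_of_left P) (hS.diff (t := P)), Set.inter_union_diff]
  rw [Set.disjoint_left]
  rintro τ ⟨_, hE1⟩ ⟨_, hE2⟩
  exact hE2 hE1

/-- Abstract recurrence: if `g` satisfies the ratio property (shifting the
consecutive tail of changepoints one step left multiplies `g` by `R k (t-1)`),
then `L k t = L (k-1) t + L k (t-1) * R k (t-1)`, where `L k t = Σ_{τ ∈ T k t} g τ`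
for `k ≥ 1` and `L 0 t = 0`. -/
theorem stmt9 (n m : ℕ) (g : (Fin (m + 1) → ℕ) → ℝ) (R : ℕ → ℕ → ℝ)
    (k t : ℕ) (hk : 1 ≤ k) (hkm : k < m) (hmt : m ≤ t) (htn : t < n)
    (hratio : ∀ τ ∈ T n m k t, τ ((k - 1 : ℕ) : Fin (m + 1)) ≠ b m (k - 1) t →
      g τ = g (fun i => if k ≤ (i : ℕ) ∧ (i : ℕ) < m then τ i - 1 else τ i) *
        R k (t - 1)) :
    (∑ᶠ τ ∈ T n m k t, g τ) =
      (if k - 1 = 0 then 0 else ∑ᶠ τ ∈ T n m (k - 1) t, g τ) +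
        (∑ᶠ τ ∈ T n m k (t - 1), g τ) * R k (t - 1) := by
  rw [split_sum g (T n m k t) (T_fin n m k t)
    {τ | τ ((k - 1 : ℕ) : Fin (m+1)) = b m (k-1) t}]
  congr 1
  · rcases Nat.lt_or_ge k 2 with hk2 | hk2
    · have hk1 : k = 1 := by omega
      subst hk1
      simp only [Nat.sub_self]
      rw [A_empty (by omega) hmt, finsum_mem_empty]
      simp
    · rw [if_neg (by omega), A_eq hk2 hkm hmt]
  · have hbij : Set.BijOn (sf m k)
        (T n m k t \ {τ | τ ((k - 1 : ℕ) : Fin (m+1)) = b m (k-1) t})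
        (T n m k (t-1)) := by
      exact Set.InvOn.bijOn
        ⟨fun τ hτ => uf_sf hk hτ.1.1, fun τ hτ => sf_uf τ⟩
        (fun τ hτ => down_mem hk hkm hmt hτ.1 hτ.2)
        (fun τ hτ => ⟨(up_mem hk hkm hmt htn hτ).1, (up_mem hk hkm hmt htn hτ).2⟩)
    have h1 : (∑ᶠ τ ∈ T n m k t \ {τ | τ ((k - 1 : ℕ) : Fin (m+1)) = b m (k-1) t}, g τ)
        = ∑ᶠ τ' ∈ T n m k (t-1), g τ' * R k (t-1) :=
      finsum_mem_eq_of_bijOn (sf m k) hbij (fun τ hτ => hratio τ hτ.1 hτ.2)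
    rw [h1, finsum_mem_eq_finite_toFinset_sum _ (T_fin n m k (t-1)),
      finsum_mem_eq_finite_toFinset_sum g (T_fin n m k (t-1)), ← Finset.sum_mul]
end

section
/- Let p : Fin m → ℕ → ℝ and g(τ) = Π_{i=1}^{m} Π_{j=τ_{i-1}+1}^{τ_i} p(i, j) · Π_{i=1}^{m-1} w(τ_i), defined on changepoint sequences. Define L(k,t) = Σ_{τ ∈ T(k,t)} g(τ), L(0,t) = 0, and R(k,t) = Π_{j=k}^{m-1} [p(j, b(j,t)+1) w(b(j,t)+1)] / [p(j+1, b(j,t)+1) w(b(j,t))]. Assuming p and w are nonzero where used, then for 1 ≤ k < m and m ≤ t < n: L(k,t) = L(k-1,t) + L(k,t-1) · R(k,t-1). -/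
/-- The unnormalised weight of a changepoint sequence:
`g τ = Π_{i=1}^{m} Π_{j=τ_{i-1}+1}^{τ_i} p i j  ·  Π_{i=1}^{m-1} w (τ i)`,
where `p i j` abstracts `P(x_j | x_{1:j-1}, z_i)`. -/
noncomputable def gfun (m : ℕ) (p : ℕ → ℕ → ℝ) (w : ℕ → ℝ)
    (τ : Fin (m + 1) → ℕ) : ℝ :=
  (∏ i : Fin m, ∏ j ∈ Finset.Ioc (τ i.castSucc) (τ i.succ), p ((i : ℕ) + 1) j) *
    ∏ i ∈ Finset.Ioo (0 : Fin (m + 1)) (Fin.last m), w (τ i)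

/-- `R k t = Π_{j=k}^{m-1} [p j (b j t + 1) · w (b j t + 1)] /
[p (j+1) (b j t + 1) · w (b j t)]` (so `R m t = 1`, the empty product). -/
noncomputable def Rfun (m : ℕ) (p : ℕ → ℕ → ℝ) (w : ℕ → ℝ) (k t : ℕ) : ℝ :=
  ∏ j ∈ Finset.Ico k m,
    p j (b m j t + 1) * w (b m j t + 1) / (p (j + 1) (b m j t + 1) * w (b m j t))

open Fin.NatCast

namespace Aux

lemma cval {m j : ℕ} (h : j ≤ m) : (((j : ℕ) : Fin (m+1)) : ℕ) = j :=
  Fin.val_cast_of_lt (by omega)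

lemma clt {m j j' : ℕ} (h1 : j < j') (h2 : j' ≤ m) :
    ((j : ℕ) : Fin (m+1)) < ((j' : ℕ) : Fin (m+1)) := by
  rw [Fin.lt_def, cval (by omega), cval h2]; exact h1

lemma cle {m j j' : ℕ} (h1 : j ≤ j') (h2 : j' ≤ m) :
    ((j : ℕ) : Fin (m+1)) ≤ ((j' : ℕ) : Fin (m+1)) := by
  rw [Fin.le_def, cval (by omega), cval h2]; exact h1

lemma clast (m : ℕ) : ((m : ℕ) : Fin (m+1)) = Fin.last m := by
  apply Fin.ext; rw [cval le_rfl, Fin.val_last]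

lemma pinned {n m k t : ℕ} {τ : Fin (m+1) → ℕ} (hτ : τ ∈ T n m k t)
    (hk : 1 ≤ k) :
    ∀ j, k ≤ j → j < m → τ ((j : ℕ) : Fin (m+1)) = t - (m - 1 - j) := by
  obtain ⟨-, hlast, hcons⟩ := hτ
  have key : ∀ d, k ≤ m - 1 - d → τ (((m - 1 - d : ℕ)) : Fin (m+1)) = t - d := by
    intro d
    induction d with
    | zero => intro _; simpa using hlast
    | succ e ih =>
      intro hd
      have h1 : k ≤ m - 1 - e := by omega
      have h2 : (m - 1 - (e+1)) + 1 = m - 1 - e := by omega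
      have := hcons (m - 1 - (e+1)) (by omega) (by omega)
      rw [h2] at this
      rw [ih h1] at this
      omega
  intro j hj hjm
  have := key (m - 1 - j) (by omega)
  have h3 : m - 1 - (m - 1 - j) = j := by omega
  rw [h3] at this; exact this

lemma mem_T_iff {n m k t : ℕ} {τ : Fin (m+1) → ℕ}
    (hk : 1 ≤ k) (hkm : k < m) (hmt : m - 1 ≤ t) :
    τ ∈ T n m k t ↔ StrictMono τ ∧ τ 0 = 0 ∧ τ (Fin.last m) = n ∧
      ∀ j, k ≤ j → j < m → τ ((j : ℕ) : Fin (m+1)) = t - (m - 1 - j) := by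
  constructor
  · intro hτ
    exact ⟨hτ.1.1, hτ.1.2.1, hτ.1.2.2, pinned hτ hk⟩
  · rintro ⟨hsm, h0, hl, hv⟩
    refine ⟨⟨hsm, h0, hl⟩, ?_, ?_⟩
    · have := hv (m-1) (by omega) (by omega)
      simpa using this
    · intro i hi hi1
      rw [hv (i+1) (by omega) hi1, hv i hi (by omega)]
      omega

/-- the shift-up map: adds 1 at indices `k ≤ j < m`. -/
def upf (m k : ℕ) (τ : Fin (m+1) → ℕ) : Fin (m+1) → ℕ :=
  fun j => τ j + if k ≤ (j : ℕ) ∧ (j : ℕ) < m then 1 else 0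

lemma upf_inj (m k : ℕ) : Function.Injective (upf m k) := by
  intro σ τ h
  funext j
  have := congrFun h j
  unfold upf at this
  by_cases hj : k ≤ (j : ℕ) ∧ (j : ℕ) < m <;> simp [hj] at this <;> exact this

lemma upf_mem {n m k t : ℕ} {τ : Fin (m+1) → ℕ} (hm : 2 ≤ m)
    (hk : 1 ≤ k) (hkm : k < m) (hmt : m ≤ t) (htn : t < n)
    (hτ : τ ∈ T n m k (t-1)) : upf m k τ ∈ T n m k t := by
  have hv := pinned hτ hk
  obtain ⟨⟨hsm, h0, hl⟩, -, -⟩ := hτ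
  rw [mem_T_iff hk hkm (by omega)]
  refine ⟨?_, ?_, ?_, ?_⟩
  · -- StrictMono
    intro a c hac
    unfold upf
    by_cases ha : k ≤ (a : ℕ) ∧ (a : ℕ) < m
    · by_cases hc : k ≤ (c : ℕ) ∧ (c : ℕ) < m
      · rw [if_pos ha, if_pos hc]
        exact Nat.add_lt_add_right (hsm hac) 1
      · -- c has index ≥ m (since c > a ≥ k), so c = last
        have hcm : (c : ℕ) = m := by
          have : (a : ℕ) < (c : ℕ) := hac
          omega
        have hcl : c = Fin.last m := by apply Fin.ext; rw [hcm, Fin.val_last]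
        rw [if_pos ha, if_neg hc, add_zero]
        -- τ a + 1 < τ c = n
        have ha' : (((a : ℕ)) : Fin (m+1)) = a := Fin.cast_val_eq_self a
        have hva := hv (a : ℕ) ha.1 ha.2
        rw [ha'] at hva
        rw [hcl, hl]
        omega
    · rw [if_neg ha, add_zero]
      calc τ a < τ c := hsm hac
        _ ≤ τ c + _ := Nat.le_add_right _ _
  · unfold upf
    simp only [Fin.val_zero]
    rw [h0]; simp; omega
  · unfold upf
    simp only [Fin.val_last]
    rw [hl]; simp
  · intro j hj hjm
    unfold upf
    rw [cval (by omega)]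
    simp only [hj, hjm, and_self, if_pos]
    rw [hv j hj hjm]
    omega

end Aux


namespace Aux2
open Aux

lemma down_mem {n m k t : ℕ} {τ : Fin (m+1) → ℕ} (hm : 2 ≤ m)
    (hk : 1 ≤ k) (hkm : k < m) (hmt : m ≤ t)
    (hτ : τ ∈ T n m k t)
    (hne : τ ((k : ℕ) : Fin (m+1)) ≠ τ (((k-1 : ℕ)) : Fin (m+1)) + 1) :
    ∃ σ ∈ T n m k (t-1), upf m k σ = τ := by
  have hv := pinned hτ hk
  obtain ⟨⟨hsm, h0, hl⟩, -, -⟩ := hτ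
  have hmono := hsm.monotone
  -- value of τ at a Fin index in [k, m)
  have hvf : ∀ a : Fin (m+1), k ≤ (a : ℕ) → (a : ℕ) < m → τ a = t - (m - 1 - (a : ℕ)) := by
    intro a h1 h2
    have := hv (a : ℕ) h1 h2
    rwa [Fin.cast_val_eq_self] at this
  -- gap: τ (k-1) + 2 ≤ τ k
  have hgap : τ (((k-1 : ℕ)) : Fin (m+1)) + 2 ≤ τ ((k : ℕ) : Fin (m+1)) := by
    have := hsm (clt (j := k-1) (j' := k) (by omega) (by omega))
    omega
  set σ : Fin (m+1) → ℕ := fun j => τ j - if k ≤ (j : ℕ) ∧ (j : ℕ) < m then 1 else 0 with hσ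
  have hup : upf m k σ = τ := by
    funext j
    unfold upf
    simp only [hσ]
    by_cases hj : k ≤ (j : ℕ) ∧ (j : ℕ) < m
    · simp only [if_pos hj]
      have := hvf j hj.1 hj.2
      omega
    · simp only [if_neg hj]
      omega
  refine ⟨σ, ?_, hup⟩
  rw [mem_T_iff hk hkm (by omega)]
  refine ⟨?_, ?_, ?_, ?_⟩
  · intro a c hac
    have hacv : (a : ℕ) < (c : ℕ) := hac
    simp only [hσ]
    by_cases ha : k ≤ (a : ℕ) ∧ (a : ℕ) < m
    · by_cases hc : k ≤ (c : ℕ) ∧ (c : ℕ) < m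
      · rw [if_pos ha, if_pos hc, hvf a ha.1 ha.2, hvf c hc.1 hc.2]
        omega
      · rw [if_pos ha, if_neg hc]
        have := hsm hac
        omega
    · rw [if_neg ha, Nat.sub_zero]
      have ha' : (a : ℕ) < k := by omega
      by_cases hc : k ≤ (c : ℕ) ∧ (c : ℕ) < m
      · rw [if_pos hc]
        have h1 : τ a ≤ τ (((k-1 : ℕ)) : Fin (m+1)) := by
          apply hmono
          rw [Fin.le_def, cval (by omega)]
          omega
        have h2 : τ ((k : ℕ) : Fin (m+1)) ≤ τ c := by
          apply hmono
          rw [Fin.le_def, cval (by omega)]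
          exact hc.1
        omega
      · rw [if_neg hc]
        have := hsm hac
        omega
  · simp only [hσ, Fin.val_zero]
    rw [h0]
    have : ¬ (k ≤ 0 ∧ 0 < m) := by omega
    exact Nat.zero_sub _
  · simp only [hσ, Fin.val_last]
    rw [hl, if_neg (by omega)]
    omega
  · intro j hj hjm
    simp only [hσ]
    rw [cval (by omega), if_pos ⟨hj, hjm⟩, hv j hj hjm]
    omega
end Aux2

namespace Aux3
open Aux Finset

/-- convert the `Fin`-indexed `w`-product to a ℕ-indexed one. -/
lemma wprod_eq (m : ℕ) (f : ℕ → ℝ) (σ : Fin (m+1) → ℕ) :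
    ∏ i ∈ Finset.Ioo (0 : Fin (m+1)) (Fin.last m), f (σ i)
      = ∏ i ∈ Finset.Ico 1 m, f (σ ((i : ℕ) : Fin (m+1))) := by
  refine Finset.prod_nbij' (i := fun a => (a : ℕ)) (j := fun i => ((i : ℕ) : Fin (m+1))) ?_ ?_ ?_ ?_ ?_
  · intro a ha
    simp only [Finset.mem_Ioo, Fin.lt_def, Fin.val_zero, Fin.val_last] at ha
    simp only [Finset.mem_Ico]
    omega
  · intro i hi
    simp only [Finset.mem_Ico] at hi
    simp only [Finset.mem_Ioo, Fin.lt_def, Fin.val_zero, Fin.val_last,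
      cval (show i ≤ m by omega)]
    omega
  · intro a _; exact Fin.cast_val_eq_self a
  · intro i hi
    rw [Finset.mem_Ico] at hi
    exact cval (by omega)
  · intro a _
    rw [Fin.cast_val_eq_self a]

/-- convert the `Fin`-indexed `p`-product to a ℕ-indexed one. -/
lemma pprod_eq (m : ℕ) (p : ℕ → ℕ → ℝ) (σ : Fin (m+1) → ℕ) :
    (∏ i : Fin m, ∏ j ∈ Finset.Ioc (σ i.castSucc) (σ i.succ), p ((i : ℕ) + 1) j)
      = ∏ i ∈ Finset.Ico 0 m,
          ∏ j ∈ Finset.Ioc (σ ((i : ℕ) : Fin (m+1))) (σ ((i+1 : ℕ) : Fin (m+1))), p (i + 1) j := by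
  rw [Nat.Ico_zero_eq_range, ← Fin.prod_univ_eq_prod_range]
  apply Finset.prod_congr rfl
  intro i _
  have h1 : (i.castSucc : Fin (m+1)) = (((i : ℕ)) : Fin (m+1)) := by
    apply Fin.ext; rw [cval (by omega), Fin.coe_castSucc]
  have h2 : (i.succ : Fin (m+1)) = ((((i : ℕ) + 1 : ℕ)) : Fin (m+1)) := by
    apply Fin.ext; rw [Fin.val_succ, cval (by omega)]
  rw [h1, h2]


/-- split off the top of an `Ico`-product -/
lemma prod_Ico_top {M : Type*} [CommMonoid M] (f : ℕ → M) {a bb : ℕ} (h : a < bb) :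
    ∏ i ∈ Finset.Ico a bb, f i = (∏ i ∈ Finset.Ico a (bb-1), f i) * f (bb-1) := by
  obtain ⟨c, rfl⟩ : ∃ c, bb = c + 1 := ⟨bb-1, by omega⟩
  rw [Finset.prod_Ico_succ_top (by omega)]
  simp

lemma gfun_upf_key {n m k t : ℕ} (p : ℕ → ℕ → ℝ) (w : ℕ → ℝ)
    (hm : 2 ≤ m) (hk : 1 ≤ k) (hkm : k < m) (hmt : m ≤ t) (htn : t < n)
    {τ : Fin (m+1) → ℕ} (hτ : τ ∈ T n m k (t-1)) :
    gfun m p w (upf m k τ) *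
        ∏ i ∈ Finset.Ico k m, (p (i+1) (t - 1 - (m-1-i) + 1) * w (t - 1 - (m-1-i))) =
      gfun m p w τ *
        ∏ i ∈ Finset.Ico k m, (p i (t - 1 - (m-1-i) + 1) * w (t - 1 - (m-1-i) + 1)) := by
  have hv := Aux.pinned hτ hk
  obtain ⟨⟨hsm, h0, hl⟩, -, -⟩ := hτ
  have hm1 : m - 1 + 1 = m := by omega
  have hk1 : k - 1 + 1 = k := by omega
  have huin : ∀ j, k ≤ j → j < m →
      upf m k τ ((j : ℕ) : Fin (m+1)) = (t - 1 - (m - 1 - j)) + 1 := by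
    intro j h1 h2
    unfold upf
    rw [cval (by omega), if_pos ⟨h1, h2⟩, hv j h1 h2]
  have huout : ∀ j, j ≤ m → ¬(k ≤ j ∧ j < m) →
      upf m k τ ((j : ℕ) : Fin (m+1)) = τ ((j : ℕ) : Fin (m+1)) := by
    intro j h1 h2
    unfold upf
    rw [cval h1, if_neg h2, add_zero]
  -- abbreviations
  set A : ℝ := ∏ i ∈ Finset.Ico 1 k, w (τ ((i : ℕ) : Fin (m+1))) with hA
  set C : ℝ := ∏ i ∈ Finset.Ico 0 (k-1),
      ∏ j ∈ Finset.Ioc (τ ((i : ℕ) : Fin (m+1))) (τ ((i+1 : ℕ) : Fin (m+1))), p (i + 1) j with hC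
  set Q1 : ℝ := ∏ j ∈ Finset.Ioc (τ (((k-1 : ℕ)) : Fin (m+1))) (t - 1 - (m-1-k)), p k j with hQ1
  set MIDu : ℝ := ∏ i ∈ Finset.Ico k (m-1), p (i+1) (t - 1 - (m-1-i) + 1 + 1) with hMIDu
  set MIDt : ℝ := ∏ i ∈ Finset.Ico k (m-1), p (i+1) (t - 1 - (m-1-i) + 1) with hMIDt
  set TAIL : ℝ := ∏ j ∈ Finset.Ioc t n, p m j with hTAIL
  -- W-parts
  have hWu : (∏ i ∈ Finset.Ioo (0 : Fin (m+1)) (Fin.last m), w (upf m k τ i))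
      = A * ∏ i ∈ Finset.Ico k m, w (t - 1 - (m-1-i) + 1) := by
    rw [wprod_eq, ← Finset.prod_Ico_consecutive _ (show 1 ≤ k by omega) (show k ≤ m by omega)]
    congr 1
    · apply Finset.prod_congr rfl
      intro i hi
      rw [Finset.mem_Ico] at hi
      rw [huout i (by omega) (by omega)]
    · apply Finset.prod_congr rfl
      intro i hi
      rw [Finset.mem_Ico] at hi
      rw [huin i hi.1 hi.2]
  have hWt : (∏ i ∈ Finset.Ioo (0 : Fin (m+1)) (Fin.last m), w (τ i))
      = A * ∏ i ∈ Finset.Ico k m, w (t - 1 - (m-1-i)) := by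
    rw [wprod_eq, ← Finset.prod_Ico_consecutive _ (show 1 ≤ k by omega) (show k ≤ m by omega)]
    congr 1
    apply Finset.prod_congr rfl
    intro i hi
    rw [Finset.mem_Ico] at hi
    rw [hv i hi.1 hi.2]
  -- P-part for upf
  have hPu : (∏ i : Fin m, ∏ j ∈ Finset.Ioc (upf m k τ i.castSucc) (upf m k τ i.succ),
        p ((i : ℕ) + 1) j)
      = C * (Q1 * p k (t - 1 - (m-1-k) + 1)) * MIDu * TAIL := by
    rw [pprod_eq, ← Finset.prod_Ico_consecutive _ (show (0:ℕ) ≤ k-1 by omega)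
        (show k-1 ≤ m by omega),
      Finset.prod_eq_prod_Ico_succ_bot (show k-1 < m by omega), hk1,
      prod_Ico_top _ (show k < m by omega)]
    have e1 : (∏ i ∈ Finset.Ico 0 (k-1),
        ∏ j ∈ Finset.Ioc (upf m k τ ((i : ℕ) : Fin (m+1))) (upf m k τ ((i+1 : ℕ) : Fin (m+1))),
          p (i + 1) j) = C := by
      apply Finset.prod_congr rfl
      intro i hi
      rw [Finset.mem_Ico] at hi
      rw [huout i (by omega) (by omega), huout (i+1) (by omega) (by omega)]
    have e2 : (∏ j ∈ Finset.Ioc (upf m k τ (((k-1 : ℕ)) : Fin (m+1)))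
          (upf m k τ ((k : ℕ) : Fin (m+1))), p k j)
        = Q1 * p k (t - 1 - (m-1-k) + 1) := by
      rw [huout (k-1) (by omega) (by omega), huin k (by omega) (by omega)]
      rw [Finset.prod_Ioc_succ_top ?hab]
      case hab =>
        have := hsm (clt (show k-1 < k by omega) (by omega))
        rw [hv k (by omega) (by omega)] at this
        omega
    have e3 : (∏ i ∈ Finset.Ico k (m-1),
        ∏ j ∈ Finset.Ioc (upf m k τ ((i : ℕ) : Fin (m+1))) (upf m k τ ((i+1 : ℕ) : Fin (m+1))),
          p (i + 1) j) = MIDu := by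
      apply Finset.prod_congr rfl
      intro i hi
      rw [Finset.mem_Ico] at hi
      rw [huin i (by omega) (by omega), huin (i+1) (by omega) (by omega),
        show t - 1 - (m-1-(i+1)) + 1 = (t - 1 - (m-1-i) + 1) + 1 by omega,
        Nat.Ioc_succ_singleton, Finset.prod_singleton]
    have e4 : (∏ j ∈ Finset.Ioc (upf m k τ (((m-1 : ℕ)) : Fin (m+1)))
          (upf m k τ (((m-1)+1 : ℕ) : Fin (m+1))), p ((m-1) + 1) j) = TAIL := by
      rw [hm1, huin (m-1) (by omega) (by omega), huout m (by omega) (by omega),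
        clast, hl, show t - 1 - (m-1-(m-1)) + 1 = t by omega]
    rw [e1, e2, e3, e4]
    ring
  -- P-part for τ
  have hPt : (∏ i : Fin m, ∏ j ∈ Finset.Ioc (τ i.castSucc) (τ i.succ), p ((i : ℕ) + 1) j)
      = C * Q1 * MIDt * (p m t * TAIL) := by
    rw [pprod_eq, ← Finset.prod_Ico_consecutive _ (show (0:ℕ) ≤ k-1 by omega)
        (show k-1 ≤ m by omega),
      Finset.prod_eq_prod_Ico_succ_bot (show k-1 < m by omega), hk1,
      prod_Ico_top _ (show k < m by omega)]
    have e2 : (∏ j ∈ Finset.Ioc (τ (((k-1 : ℕ)) : Fin (m+1))) (τ ((k : ℕ) : Fin (m+1))),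
          p k j) = Q1 := by
      rw [hv k (by omega) (by omega)]
    have e3 : (∏ i ∈ Finset.Ico k (m-1),
        ∏ j ∈ Finset.Ioc (τ ((i : ℕ) : Fin (m+1))) (τ ((i+1 : ℕ) : Fin (m+1))),
          p (i + 1) j) = MIDt := by
      apply Finset.prod_congr rfl
      intro i hi
      rw [Finset.mem_Ico] at hi
      rw [hv i (by omega) (by omega), hv (i+1) (by omega) (by omega),
        show t - 1 - (m-1-(i+1)) = (t - 1 - (m-1-i)) + 1 by omega,
        Nat.Ioc_succ_singleton, Finset.prod_singleton]
    have e4 : (∏ j ∈ Finset.Ioc (τ (((m-1 : ℕ)) : Fin (m+1))) (τ (((m-1)+1 : ℕ) : Fin (m+1))),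
          p ((m-1) + 1) j) = p m t * TAIL := by
      rw [hm1, hv (m-1) (by omega) (by omega), clast, hl,
        show t - 1 - (m-1-(m-1)) = t - 1 by omega]
      rw [← Finset.prod_Ioc_consecutive _ (show t-1 ≤ t by omega) (show t ≤ n by omega)]
      congr 1
      have h6 : Finset.Ioc (t-1) t = {t} := by
        ext x
        simp only [Finset.mem_Ioc, Finset.mem_singleton]
        omega
      rw [h6, Finset.prod_singleton]
    rw [e2, e3, e4]
    ring
  -- extra-product decompositions
  have e7 : (∏ i ∈ Finset.Ico k m, p (i+1) (t - 1 - (m-1-i) + 1)) = MIDt * p m t := by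
    rw [prod_Ico_top _ (show k < m by omega)]
    congr 1
    rw [show t - 1 - (m-1-(m-1)) + 1 = t by omega, hm1]
  have e8 : (∏ i ∈ Finset.Ico k m, p i (t - 1 - (m-1-i) + 1))
      = p k (t - 1 - (m-1-k) + 1) * MIDu := by
    rw [Finset.prod_eq_prod_Ico_succ_bot (show k < m by omega)]
    congr 1
    rw [hMIDu, Finset.prod_Ico_eq_prod_range, Finset.prod_Ico_eq_prod_range,
      show m - (k+1) = m-1-k by omega]
    apply Finset.prod_congr rfl
    intro i hi
    rw [Finset.mem_range] at hi
    rw [show k+1+i = (k+i)+1 by omega]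
    congr 1
    omega
  -- assemble
  unfold gfun
  rw [hPu, hPt, hWu, hWt, Finset.prod_mul_distrib, Finset.prod_mul_distrib, e7, e8]
  ring


lemma gfun_upf {n m k t : ℕ} (p : ℕ → ℕ → ℝ) (w : ℕ → ℝ)
    (hp : ∀ i j, p i j ≠ 0) (hw : ∀ i, w i ≠ 0)
    (hm : 2 ≤ m) (hk : 1 ≤ k) (hkm : k < m) (hmt : m ≤ t) (htn : t < n)
    {τ : Fin (m+1) → ℕ} (hτ : τ ∈ T n m k (t-1)) :
    gfun m p w (upf m k τ) = gfun m p w τ * Rfun m p w k (t-1) := by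
  have hkey := gfun_upf_key p w hm hk hkm hmt htn hτ
  have hD : (∏ i ∈ Finset.Ico k m, (p (i+1) (t - 1 - (m-1-i) + 1) * w (t - 1 - (m-1-i)))) ≠ 0 :=
    Finset.prod_ne_zero_iff.mpr (fun i _ => mul_ne_zero (hp _ _) (hw _))
  unfold Rfun
  simp only [b]
  rw [Finset.prod_div_distrib, mul_div_assoc' , eq_div_iff hD]
  calc gfun m p w (upf m k τ) *
        ∏ i ∈ Finset.Ico k m, (p (i+1) (t - 1 - (m-1-i) + 1) * w (t - 1 - (m-1-i)))
      = gfun m p w τ *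
        ∏ i ∈ Finset.Ico k m, (p i (t - 1 - (m-1-i) + 1) * w (t - 1 - (m-1-i) + 1)) := hkey
    _ = _ := by ring

end Aux3


open Aux Aux2 Aux3 in
/-- Core recurrence (Theorem 2 of the paper): with
`L k t = Σ_{τ ∈ T k t} (gfun m p w) τ` for `1 ≤ k < m` and `L 0 t = 0`, one has
`L k t = L (k-1) t + L k (t-1) * R k (t-1)` for `1 ≤ k < m` and `m ≤ t < n`. -/
theorem stmt15 (n m k t : ℕ) (hm : 2 ≤ m) (hmn : m ≤ n)
    (p : ℕ → ℕ → ℝ) (w : ℕ → ℝ) (hp : ∀ i j, p i j ≠ 0) (hw : ∀ i, w i ≠ 0)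
    (hk : 1 ≤ k) (hkm : k < m) (hmt : m ≤ t) (htn : t < n) :
    (∑ᶠ τ ∈ T n m k t, gfun m p w τ) =
      (if k - 1 = 0 then 0 else ∑ᶠ τ ∈ T n m (k - 1) t, gfun m p w τ) +
        (∑ᶠ τ ∈ T n m k (t - 1), gfun m p w τ) * Rfun m p w k (t - 1) := by
  classical
  have hfin : ∀ k' t', (T n m k' t').Finite := by
    intro k' t'
    apply Set.Finite.subset (Set.Finite.pi' (fun _ : Fin (m+1) => Set.finite_Iic n))
    intro τ hτ
    intro i
    simp only [Set.mem_Iic]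
    have := hτ.1.1.monotone (Fin.le_last i)
    rw [hτ.1.2.2] at this
    exact this
  set A : Set (Fin (m+1) → ℕ) :=
    {τ | τ ∈ T n m k t ∧ τ ((k : ℕ) : Fin (m+1)) = τ (((k-1 : ℕ)) : Fin (m+1)) + 1} with hA
  have hsplit : T n m k t = A ∪ (upf m k '' T n m k (t-1)) := by
    ext τ
    constructor
    · intro hτ
      by_cases hc : τ ((k : ℕ) : Fin (m+1)) = τ (((k-1 : ℕ)) : Fin (m+1)) + 1
      · exact Or.inl ⟨hτ, hc⟩
      · exact Or.inr (down_mem hm hk hkm hmt hτ hc)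
    · intro hτ
      rcases hτ with h | ⟨σ, hσ, rfl⟩
      · exact h.1
      · exact upf_mem hm hk hkm hmt htn hσ
  have hdisj : Disjoint A (upf m k '' T n m k (t-1)) := by
    rw [Set.disjoint_left]
    rintro τ ⟨hτT, hτc⟩ ⟨σ, hσ, rfl⟩
    have h1 : upf m k σ ((k : ℕ) : Fin (m+1)) = σ ((k : ℕ) : Fin (m+1)) + 1 := by
      unfold upf
      rw [cval (by omega), if_pos ⟨le_rfl, hkm⟩]
    have h2 : upf m k σ (((k-1 : ℕ)) : Fin (m+1)) = σ (((k-1 : ℕ)) : Fin (m+1)) := by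
      unfold upf
      rw [cval (by omega), if_neg (by omega), add_zero]
    rw [h1, h2] at hτc
    have h3 := hσ.1.1 (clt (show k-1 < k by omega) (by omega))
    omega
  have hAfin : A.Finite := (hfin k t).subset (fun τ h => h.1)
  have hIfin : (upf m k '' T n m k (t-1)).Finite := (hfin k (t-1)).image _
  rw [hsplit, finsum_mem_union hdisj hAfin hIfin]
  congr 1
  · by_cases hk1 : k - 1 = 0
    · rw [if_pos hk1]
      have hAe : A = ∅ := by
        ext τ
        simp only [Set.mem_empty_iff_false, iff_false]
        rintro ⟨hτT, hτc⟩
        have h1 := pinned hτT hk k le_rfl (by omega)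
        have h2 : τ (((k-1 : ℕ)) : Fin (m+1)) = 0 := by
          rw [hk1]
          simpa using hτT.1.2.1
        rw [h1, h2] at hτc
        omega
      rw [hAe, finsum_mem_empty]
    · rw [if_neg hk1]
      have hk2 : 2 ≤ k := by omega
      have hk1' : k - 1 + 1 = k := by omega
      have hAT : A = T n m (k-1) t := by
        ext τ
        constructor
        · rintro ⟨hτ, hc⟩
          refine ⟨hτ.1, hτ.2.1, ?_⟩
          intro i hi hi1
          rcases eq_or_lt_of_le hi with h | h
          · subst h
            rw [hk1']
            exact hc
          · exact hτ.2.2 i (by omega) hi1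
        · intro hτ
          refine ⟨⟨hτ.1, hτ.2.1, fun i hi hi1 => hτ.2.2 i (by omega) hi1⟩, ?_⟩
          have := hτ.2.2 (k-1) le_rfl (by omega)
          rw [hk1'] at this
          exact this
      rw [hAT]
  · rw [finsum_mem_image ((upf_inj m k).injOn)]
    rw [finsum_mem_congr rfl
      (fun σ hσ => gfun_upf p w hp hw hm hk hkm hmt htn hσ)]
    rw [finsum_mem_eq_finite_toFinset_sum _ (hfin k (t-1)),
      finsum_mem_eq_finite_toFinset_sum _ (hfin k (t-1)), ← Finset.sum_mul]
end
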